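/- Let q_ν(x) = (-(x+ν))^{ν/2-1} e^{-(x+ν)/2}/(2^{ν/2}Γ(ν/2)) for x < -ν. Then for every x < -ν, 2(x+ν) q_ν(x) = ∫_{x}^{-ν} u q_ν(u) du. -/

import Mathlib

open MeasureTheory Real intervalIntegral

/-- Auxiliary (non-probability) density used on `(-∞, -ν)`. -/
noncomputable def qnu (ν : ℝ) (x : ℝ) : ℝ :=
  if x < -ν then (-(x + ν)) ^ (ν / 2 - 1) * Real.exp (-(x + ν) / 2) /
    (2 ^ (ν / 2) * Real.Gamma (ν / 2)) else 0

/-- Fundamental identity `2(x+ν) q_ν(x) = ∫_x^{-ν} u q_ν(u) du` for `x < -ν`. -/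
theorem qnu_fundamental_identity (ν : ℝ) (hν : 0 < ν) (x : ℝ) (hx : x < -ν) :
    2 * (x + ν) * qnu ν x = ∫ u in x..(-ν), u * qnu ν u := by
  set C : ℝ := 2 ^ (ν / 2) * Real.Gamma (ν / 2) with hCdef
  have hC : 0 < C := mul_pos (Real.rpow_pos_of_pos two_pos _)
    (Real.Gamma_pos_of_pos (by linarith))
  set F : ℝ → ℝ := fun u => 2 * (-(u + ν)) ^ (ν / 2) * Real.exp (-(u + ν) / 2) / C with hF
  -- derivative on the open interval
  have hFd : ∀ u ∈ Set.Ioo x (-ν), HasDerivAt F (u * qnu ν u) u := by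
    intro u hu
    have ht : 0 < -(u + ν) := by linarith [hu.2]
    have h1 : HasDerivAt (fun u : ℝ => -(u + ν)) (-1) u := by
      exact ((hasDerivAt_id u).add_const ν).neg
    have h2 : HasDerivAt (fun u : ℝ => (-(u + ν)) ^ (ν / 2))
        (-1 * (ν / 2) * (-(u + ν)) ^ (ν / 2 - 1)) u :=
      h1.rpow_const (p := ν / 2) (Or.inl ht.ne')
    have h3 : HasDerivAt (fun u : ℝ => Real.exp (-(u + ν) / 2))
        (Real.exp (-(u + ν) / 2) * (-1 / 2)) u := by
      have := (h1.div_const 2).exp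
      simpa using this
    have h4 := (((h2.const_mul 2).mul h3).div_const C)
    refine h4.congr_deriv (Eq.symm ?_)
    rw [qnu, if_pos hu.2]
    have hpow : (-(u + ν)) ^ (ν / 2) = (-(u + ν)) ^ (ν / 2 - 1) * (-(u + ν)) := by
      rw [← Real.rpow_add_one ht.ne' (ν / 2 - 1)]; ring_nf
    rw [hpow]
    field_simp
    ring
  -- continuity on closed interval
  have hFc : ContinuousOn F (Set.Icc x (-ν)) := by
    apply ContinuousOn.div_const
    apply ContinuousOn.mul
    · apply ContinuousOn.mul continuousOn_const
      exact (ContinuousOn.rpow_const (by fun_prop) (fun u _ => Or.inr (by positivity)))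
    · fun_prop
  -- integrability
  have hint : IntervalIntegrable (fun u => u * qnu ν u) volume x (-ν) := by
    have hr : IntervalIntegrable (fun t : ℝ => t ^ (ν / 2 - 1)) volume 0 (-ν - x) :=
      intervalIntegrable_rpow' (by linarith)
    have hr2 := hr.comp_sub_left (-ν)
    simp only [sub_zero, sub_sub_cancel] at hr2
    have hcg : ContinuousOn (fun u : ℝ => u * Real.exp (-(u + ν) / 2) / C)
        (Set.uIcc x (-ν)) := by fun_prop
    have hg : IntervalIntegrable
        (fun u => (u * Real.exp (-(u + ν) / 2) / C) * ((-ν - u) ^ (ν / 2 - 1)))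
        volume x (-ν) := hr2.symm.continuousOn_mul hcg
    have hae : ∀ᵐ u : ℝ, u ≠ -ν := by
      rw [Filter.eventually_iff, mem_ae_iff]
      convert Real.volume_singleton (a := -ν) using 2
      ext u; simp
    constructor
    · apply hg.1.congr
      filter_upwards [ae_restrict_mem measurableSet_Ioc, ae_restrict_of_ae hae] with u hu hune
      have hu2 : u < -ν := lt_of_le_of_ne hu.2 hune
      rw [qnu, if_pos hu2]
      have : -ν - u = -(u + ν) := by ring
      rw [this]; ring
    · have he : Set.Ioc (-ν) x = ∅ := Set.Ioc_eq_empty (by intro h; linarith)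
      rw [he]; exact integrableOn_empty
  have key := intervalIntegral.integral_eq_sub_of_hasDeriv_right_of_le hx.le hFc
    (fun u hu => (hFd u hu).hasDerivWithinAt) hint
  rw [key]
  have hF0 : F (-ν) = 0 := by
    simp only [hF]
    rw [show -(-ν + ν) = (0 : ℝ) by ring, Real.zero_rpow (by positivity : ν / 2 ≠ 0)]
    ring
  rw [hF0, hF, qnu, if_pos hx]
  simp only [← hCdef]
  have ht0 : 0 < -(x + ν) := by linarith
  have hpow : (-(x + ν)) ^ (ν / 2) = (-(x + ν)) ^ (ν / 2 - 1) * (-(x + ν)) := by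
    rw [← Real.rpow_add_one ht0.ne' (ν / 2 - 1)]; ring_nf
  show _ = 0 - 2 * (-(x + ν)) ^ (ν / 2) * Real.exp (-(x + ν) / 2) / C
  rw [hpow]
  field_simp
  ring
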